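/- Let d ≥ 2, let e_1, …, e_{d+1} be the standard basis of ℝ^{d+1}, let X = {(x_1, …, x_{d+1}) ∈ ℝ^{d+1} : Σ_{i=1}^d x_i = 0} equipped with the ℓ_1 norm ‖(x_1, …, x_{d+1})‖_1 = Σ_{i=1}^{d+1} |x_i|, let c = Σ_{i=1}^d e_i, and let V = {d·e_i − c : i = 1, …, d} ∪ {2e_{d+1}, −2e_{d+1}}. Then V is the vertex set of a d-polytope P in X, all pairwise ℓ_1-distances between distinct points of V equal 2d except the distance between 2e_{d+1} and −2e_{d+1}, which equals 4; moreover P is subequilateral with respect to the ℓ_1 norm and λ(V; ‖·‖_1) = d/2. -/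

import Mathlib

open Pointwise

/-- `N` is a norm on the real vector space `E`. -/
def IsNorm {E : Type*} [AddCommGroup E] [Module ℝ E] (N : E → ℝ) : Prop :=
  (∀ x, N x = 0 ↔ x = 0) ∧ (∀ (a : ℝ) (x : E), N (a • x) = |a| * N x) ∧
  (∀ x y, N (x + y) ≤ N x + N y)

/-- The segment `[x, y]` is an edge (a 1-dimensional face) of `P`. -/
def IsEdge {E : Type*} [AddCommGroup E] [Module ℝ E] (P : Set E) (x y : E) : Prop :=
  x ≠ y ∧ IsExtreme ℝ P (segment ℝ x y)

/-- The diameter of a set `P` with respect to the norm `N`. -/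
noncomputable def polyDiam {E : Type*} [AddCommGroup E] (N : E → ℝ) (P : Set E) : ℝ :=
  sSup {r | ∃ x ∈ P, ∃ y ∈ P, N (x - y) = r}

/-- The minimum pairwise distance of a finite set `V` with respect to the norm `N`. -/
noncomputable def minPairDist {E : Type*} [AddCommGroup E] (N : E → ℝ) (V : Finset E) : ℝ :=
  sInf {r | ∃ x ∈ V, ∃ y ∈ V, x ≠ y ∧ N (x - y) = r}

/-- The functional `λ(V; N) = diam(V) / min pairwise distance`. -/
noncomputable def lamV {E : Type*} [AddCommGroup E] (N : E → ℝ) (V : Finset E) : ℝ :=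
  polyDiam N (V : Set E) / minPairDist N V

/-- `P` is subequilateral with respect to `N`: every edge has length the diameter of `P`. -/
def Subequilateral {E : Type*} [AddCommGroup E] [Module ℝ E] (N : E → ℝ) (P : Set E) : Prop :=
  ∀ x y, IsEdge P x y → N (x - y) = polyDiam N P

/-- There are two parallel hyperplanes, one through `x` and one through `y`, such that `P`
lies in the closed slab bounded by them. -/
def InSlab {E : Type*} [AddCommGroup E] [Module ℝ E] (P : Set E) (x y : E) : Prop :=
  ∃ f : E →ₗ[ℝ] ℝ, f ≠ 0 ∧ ∀ z ∈ P, min (f x) (f y) ≤ f z ∧ f z ≤ max (f x) (f y)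

/-- `P` is edge-antipodal. -/
def EdgeAntipodal {E : Type*} [AddCommGroup E] [Module ℝ E] (P : Set E) : Prop :=
  ∀ x y, IsEdge P x y → InSlab P x y

/-- `P` is antipodal. -/
def Antipodal {E : Type*} [AddCommGroup E] [Module ℝ E] (P : Set E) : Prop :=
  ∀ x ∈ Set.extremePoints ℝ P, ∀ y ∈ Set.extremePoints ℝ P, x ≠ y → InSlab P x y

/-- The relative norm determined by `P`, i.e. the norm with unit ball `P - P`. -/
noncomputable def relNorm {E : Type*} [AddCommGroup E] [Module ℝ E] (P : Set E) : E → ℝ :=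
  gauge (P - P)

section helpers
variable {E : Type*} [AddCommGroup E] [Module ℝ E]

lemma seg_endpoint_extreme [NoZeroSMulDivisors ℝ E] {x y : E} (hxy : x ≠ y) :
    x ∈ Set.extremePoints ℝ (segment ℝ x y) := by
  refine ⟨left_mem_segment _ _ _, ?_⟩
  rintro a ⟨a1, a2, ha1, ha2, ha12, rfl⟩ b ⟨b1, b2, hb1, hb2, hb12, rfl⟩ ⟨t, s, ht, hs, hts, hx⟩
  have ha1' : a1 = 1 - a2 := by linarith
  have hb1' : b1 = 1 - b2 := by linarith
  have hs' : s = 1 - t := by linarith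
  subst ha1' hb1' hs'
  have key : (t * a2 + (1 - t) * b2) • (y - x) = 0 := by
    have : (t * a2 + (1 - t) * b2) • (y - x)
        = (t • ((1 - a2) • x + a2 • y) + (1 - t) • ((1 - b2) • x + b2 • y)) - x := by
      module
    rw [this, hx, sub_self]
  have hc : t * a2 + (1 - t) * b2 = 0 := by
    rcases smul_eq_zero.1 key with h | h
    · exact h
    · exact absurd (sub_eq_zero.1 h) (Ne.symm hxy)
  have ha2' : a2 = 0 := by
    have h1 : 0 ≤ t * a2 := mul_nonneg ht.le ha2
    have h2 : 0 ≤ (1 - t) * b2 := mul_nonneg (by linarith) hb2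
    have : t * a2 = 0 := by linarith
    rcases mul_eq_zero.1 this with h | h
    · exact absurd h ht.ne'
    · exact h
  have hb2' : b2 = 0 := by
    have h1 : 0 ≤ t * a2 := mul_nonneg ht.le ha2
    have h2 : 0 ≤ (1 - t) * b2 := mul_nonneg (by linarith) hb2
    have h3 : (1 - t) * b2 = 0 := by linarith
    rcases mul_eq_zero.1 h3 with h | h
    · exact absurd h (by linarith)
    · exact h
  subst ha2' hb2'
  simp

lemma vertex_extreme {s : Set E} {v : E} (hv : v ∈ s) (f : E →ₗ[ℝ] ℝ)
    (hf : ∀ w ∈ s, w ≠ v → f w ≤ 0) (hfv : 0 < f v) :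
    v ∈ Set.extremePoints ℝ (convexHull ℝ s) := by
  have hub : ∀ x ∈ convexHull ℝ s, f x ≤ f v := by
    intro x hx
    refine convexHull_min ?_ (convex_halfSpace_le (LinearMap.isLinear f) (f v)) hx
    intro w hw
    show f w ≤ f v
    by_cases hwv : w = v
    · subst hwv; exact le_rfl
    · exact le_of_lt (lt_of_le_of_lt (hf w hw hwv) hfv)
  have hkey : ∀ x ∈ convexHull ℝ s, f v ≤ f x → x = v := by
    intro x hx hfx
    by_cases hsv : (s \ {v}).Nonempty
    · have hdecomp : convexHull ℝ s = convexJoin ℝ {v} (convexHull ℝ (s \ {v})) := by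
        rw [← convexHull_insert hsv, Set.insert_diff_singleton, Set.insert_eq_of_mem hv]
      rw [hdecomp] at hx
      obtain ⟨a, ha, y, hy, hseg⟩ := mem_convexJoin.1 hx
      rw [Set.mem_singleton_iff] at ha; subst ha
      obtain ⟨t, u, ht, hu, htu, rfl⟩ := hseg
      have hyv : f y ≤ 0 :=
        convexHull_min (fun w hw => hf w hw.1 hw.2) (convex_halfSpace_le (LinearMap.isLinear f) 0) hy
      have hfx' : t * f a + u * f y = f (t • a + u • y) := by
        simp [map_add, map_smul, smul_eq_mul]
      have hu0 : u = 0 := by nlinarith [hfx, hfx']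
      subst hu0
      have ht1 : t = 1 := by linarith
      subst ht1
      simp
    · have hsv' : s = {v} := by
        apply Set.eq_singleton_iff_unique_mem.2 ⟨hv, fun w hw => ?_⟩
        by_contra hwv
        exact hsv ⟨w, hw, hwv⟩
      rw [hsv', convexHull_singleton] at hx
      exact hx
  refine ⟨subset_convexHull ℝ s hv, ?_⟩
  rintro a ha b hb ⟨t, u, ht, hu, htu, heq⟩
  have hfa := hub a ha
  have hfb := hub b hb
  have hveq : t * f a + u * f b = f v := by
    rw [← heq]; simp [map_add, map_smul, smul_eq_mul]
  have hfa' : f v ≤ f a := by nlinarith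
  have hfb' : f v ≤ f b := by nlinarith
  exact hkey a ha hfa'

end helpers

/-- In the hyperplane `X = {x ∈ ℝ^{d+1} : Σ_{i=1}^d x_i = 0}` with the `ℓ_1`
norm, the set `V = {d·e_i − c : i = 1,…,d} ∪ {±2e_{d+1}}` (where `c = Σ_{i=1}^d e_i`) is the
vertex set of a `d`-polytope `P`; all pairwise distances between distinct points of `V`
equal `2d` except the distance between `±2e_{d+1}`, which is `4`; `P` is subequilateral with
respect to the `ℓ_1` norm, and `λ(V; ‖·‖_1) = d/2`. -/
theorem talata_l1_example (d : ℕ) (hd : 2 ≤ d)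
    (e : Fin (d + 1) → (Fin (d + 1) → ℝ)) (he : ∀ i, e i = Pi.single i 1)
    (l1 : (Fin (d + 1) → ℝ) → ℝ) (hl1 : ∀ x, l1 x = ∑ i, |x i|)
    (c : Fin (d + 1) → ℝ) (hc : c = ∑ i : Fin d, e i.castSucc)
    (X : Set (Fin (d + 1) → ℝ)) (hX : X = {x | ∑ i : Fin d, x i.castSucc = 0})
    (V : Finset (Fin (d + 1) → ℝ))
    (hV : (V : Set (Fin (d + 1) → ℝ)) =
      Set.range (fun i : Fin d => (d : ℝ) • e i.castSucc - c) ∪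
        {(2 : ℝ) • e (Fin.last d), -((2 : ℝ) • e (Fin.last d))})
    (P : Set (Fin (d + 1) → ℝ)) (hP : P = convexHull ℝ (V : Set (Fin (d + 1) → ℝ))) :
    (V : Set (Fin (d + 1) → ℝ)) ⊆ X ∧
      Set.extremePoints ℝ P = (V : Set (Fin (d + 1) → ℝ)) ∧
      Module.finrank ℝ (affineSpan ℝ (V : Set (Fin (d + 1) → ℝ))).direction = d ∧
      l1 ((2 : ℝ) • e (Fin.last d) - -((2 : ℝ) • e (Fin.last d))) = 4 ∧
      (∀ x ∈ V, ∀ y ∈ V, x ≠ y →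
        ({x, y} : Set (Fin (d + 1) → ℝ)) ≠
            {(2 : ℝ) • e (Fin.last d), -((2 : ℝ) • e (Fin.last d))} →
          l1 (x - y) = 2 * d) ∧
      Subequilateral l1 P ∧
      lamV l1 V = (d : ℝ) / 2 := by
  have hdR : (2:ℝ) ≤ (d:ℝ) := by exact_mod_cast hd
  have hd0 : (d:ℝ) ≠ 0 := by positivity
  have hd1 : (d:ℝ) - 1 ≠ 0 := by intro h; nlinarith
  set pp : Fin (d+1) → ℝ := (2:ℝ) • e (Fin.last d) with hppdef
  set qq : Fin (d+1) → ℝ := -pp with hqqdef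
  set v : Fin d → (Fin (d+1) → ℝ) := fun i => (d : ℝ) • e i.castSucc - c with hvdef
  set i0 : Fin d := ⟨0, by omega⟩ with hi0
  set i1 : Fin d := ⟨1, by omega⟩ with hi1
  have hi01 : i0 ≠ i1 := by simp [hi0, hi1, Fin.ext_iff]
  -- coordinate computations
  have hcsne : ∀ j : Fin d, j.castSucc ≠ Fin.last d := fun j => (Fin.castSucc_lt_last j).ne
  have hcs : ∀ j : Fin d, c j.castSucc = 1 := by
    intro j
    rw [hc, Finset.sum_apply]
    simp only [he, Pi.single_apply, Fin.castSucc_inj]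
    simp
  have hcl : c (Fin.last d) = 0 := by
    rw [hc, Finset.sum_apply]
    simp only [he, Pi.single_apply]
    rw [Finset.sum_eq_zero]
    intro i _
    rw [if_neg (Ne.symm (hcsne i))]
  have hvc : ∀ i j : Fin d, v i j.castSucc = if j = i then (d:ℝ) - 1 else -1 := by
    intro i j
    simp only [hvdef, Pi.sub_apply, Pi.smul_apply, he, Pi.single_apply, smul_eq_mul,
      Fin.castSucc_inj, hcs]
    by_cases h : j = i <;> simp [h]
  have hvl : ∀ i, v i (Fin.last d) = 0 := by
    intro i
    simp only [hvdef, Pi.sub_apply, Pi.smul_apply, he, Pi.single_apply, smul_eq_mul, hcl]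
    rw [if_neg (Ne.symm (hcsne i))]
    ring
  have hpc : ∀ j : Fin d, pp j.castSucc = 0 := by
    intro j
    simp only [hppdef, Pi.smul_apply, he, Pi.single_apply, smul_eq_mul]
    rw [if_neg (hcsne j)]
    ring
  have hpl : pp (Fin.last d) = 2 := by
    simp [hppdef, he, Pi.single_apply]
  -- memberships
  have hvVs : ∀ i, v i ∈ (V : Set (Fin (d+1) → ℝ)) := by
    intro i; rw [hV]; exact Or.inl ⟨i, rfl⟩
  have hpVs : pp ∈ (V : Set (Fin (d+1) → ℝ)) := by
    rw [hV]; exact Or.inr (Or.inl rfl)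
  have hqVs : qq ∈ (V : Set (Fin (d+1) → ℝ)) := by
    rw [hV]; exact Or.inr (Or.inr rfl)
  have hpq : pp ≠ qq := by
    intro h
    have := congrFun h (Fin.last d)
    rw [hpl] at this
    simp only [hqqdef, Pi.neg_apply, hpl] at this
    norm_num at this
  have hvinj : ∀ i j : Fin d, i ≠ j → v i ≠ v j := by
    intro i j hij h
    have := congrFun h i.castSucc
    rw [hvc, hvc, if_pos rfl, if_neg hij] at this
    nlinarith
  have hvp : ∀ i, v i ≠ pp := by
    intro i h
    have := congrFun h (Fin.last d)
    rw [hvl, hpl] at this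
    norm_num at this
  have hvq : ∀ i, v i ≠ qq := by
    intro i h
    have := congrFun h (Fin.last d)
    rw [hvl] at this
    simp only [hqqdef, Pi.neg_apply, hpl] at this
    norm_num at this
  -- distance computations
  have hl1sub : ∀ x y, l1 (x - y) = l1 (y - x) := by
    intro x y
    rw [hl1, hl1]
    exact Finset.sum_congr rfl fun k _ => by rw [Pi.sub_apply, Pi.sub_apply, abs_sub_comm]
  have hA : ∀ i j : Fin d, i ≠ j → l1 (v i - v j) = 2 * d := by
    intro i j hij
    rw [hl1, Fin.sum_univ_castSucc]
    have hlast : |(v i - v j) (Fin.last d)| = 0 := by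
      rw [Pi.sub_apply, hvl, hvl, sub_self, abs_zero]
    rw [hlast, add_zero]
    have hterm : ∀ k : Fin d, |(v i - v j) k.castSucc|
        = (if k = i then (d:ℝ) else 0) + (if k = j then (d:ℝ) else 0) := by
      intro k
      rw [Pi.sub_apply, hvc, hvc]
      by_cases hki : k = i
      · subst hki
        rw [if_pos rfl, if_neg hij, if_pos rfl, if_neg hij]
        rw [show (d:ℝ) - 1 - (-1) = d by ring, abs_of_nonneg (by linarith), add_zero]
      · by_cases hkj : k = j
        · subst hkj
          rw [if_neg hki, if_pos rfl, if_neg hki, if_pos rfl]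
          rw [show (-1 : ℝ) - ((d:ℝ) - 1) = -d by ring, abs_neg, abs_of_nonneg (by linarith),
            zero_add]
        · rw [if_neg hki, if_neg hkj, if_neg hki, if_neg hkj]
          norm_num
    rw [Finset.sum_congr rfl fun k _ => hterm k, Finset.sum_add_distrib]
    rw [Finset.sum_ite_eq' Finset.univ i fun _ => (d:ℝ),
      Finset.sum_ite_eq' Finset.univ j fun _ => (d:ℝ)]
    simp
    ring
  have hBgen : ∀ (i : Fin d) (z : Fin (d+1) → ℝ), (∀ j : Fin d, z j.castSucc = 0) →
      |z (Fin.last d)| = 2 → l1 (v i - z) = 2 * d := by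
    intro i z hz hzl
    rw [hl1, Fin.sum_univ_castSucc]
    have hlast : |(v i - z) (Fin.last d)| = 2 := by
      rw [Pi.sub_apply, hvl, zero_sub, abs_neg, hzl]
    rw [hlast]
    have hterm : ∀ k : Fin d, |(v i - z) k.castSucc|
        = 1 + (if k = i then (d:ℝ) - 2 else 0) := by
      intro k
      rw [Pi.sub_apply, hvc, hz, sub_zero]
      by_cases hki : k = i
      · subst hki
        rw [if_pos rfl, if_pos rfl, abs_of_nonneg (by linarith)]
        ring
      · rw [if_neg hki, if_neg hki]
        norm_num
    rw [Finset.sum_congr rfl fun k _ => hterm k, Finset.sum_add_distrib]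
    rw [Finset.sum_ite_eq' Finset.univ i fun _ => (d:ℝ) - 2]
    simp
    ring
  have hBp : ∀ i : Fin d, l1 (v i - pp) = 2 * d := by
    intro i
    exact hBgen i pp hpc (by rw [hpl]; norm_num)
  have hBq : ∀ i : Fin d, l1 (v i - qq) = 2 * d := by
    intro i
    refine hBgen i qq (fun j => ?_) ?_
    · simp only [hqqdef, Pi.neg_apply, hpc j]; ring
    · simp only [hqqdef, Pi.neg_apply, hpl]; norm_num
  have hC : l1 (pp - qq) = 4 := by
    rw [hl1, Fin.sum_univ_castSucc]
    have hlast : |(pp - qq) (Fin.last d)| = 4 := by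
      simp only [Pi.sub_apply, hqqdef, Pi.neg_apply, hpl]
      norm_num
    have hzero : ∀ k : Fin d, |(pp - qq) k.castSucc| = 0 := by
      intro k
      simp only [Pi.sub_apply, hqqdef, Pi.neg_apply, hpc k]
      norm_num
    rw [hlast, Finset.sum_congr rfl fun k _ => hzero k]
    simp
  -- the pairwise distance statement

  have hpair : ∀ x ∈ (V : Set (Fin (d+1) → ℝ)), ∀ y ∈ (V : Set (Fin (d+1) → ℝ)), x ≠ y →
      ({x, y} : Set (Fin (d + 1) → ℝ)) ≠ {pp, qq} → l1 (x - y) = 2 * d := by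
    intro x hx y hy hxy hne
    rw [hV] at hx hy
    simp only [Set.mem_union, Set.mem_range, Set.mem_insert_iff, Set.mem_singleton_iff]
      at hx hy
    rcases hx with ⟨i, rfl⟩ | rfl | rfl
    · rcases hy with ⟨j, rfl⟩ | rfl | rfl
      · exact hA i j (fun h => hxy (by rw [h]))
      · exact hBp i
      · exact hBq i
    · rcases hy with ⟨j, rfl⟩ | rfl | rfl
      · rw [hl1sub]; exact hBp j
      · exact absurd rfl hxy
      · exact absurd rfl hne
    · rcases hy with ⟨j, rfl⟩ | rfl | rfl
      · rw [hl1sub]; exact hBq j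
      · exact absurd (Set.pair_comm qq pp) hne
      · exact absurd rfl hxy
  -- boundedness
  have hl10 : l1 0 = 0 := by rw [hl1]; simp
  have hbV : ∀ x ∈ (V : Set (Fin (d+1) → ℝ)), ∀ y ∈ (V : Set (Fin (d+1) → ℝ)),
      l1 (x - y) ≤ 2 * d := by
    intro x hx y hy
    rcases eq_or_ne x y with rfl | hxy
    · rw [sub_self, hl10]; linarith
    by_cases hp2 : ({x, y} : Set (Fin (d+1) → ℝ)) = {pp, qq}
    · rcases Set.pair_eq_pair_iff.1 hp2 with ⟨rfl, rfl⟩ | ⟨rfl, rfl⟩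
      · rw [hC]; linarith
      · rw [hl1sub, hC]; linarith
    · rw [hpair x hx y hy hxy hp2]
  have hl1tri : ∀ a b, l1 (a + b) ≤ l1 a + l1 b := by
    intro a b
    rw [hl1, hl1, hl1, ← Finset.sum_add_distrib]
    exact Finset.sum_le_sum fun k _ => by rw [Pi.add_apply]; exact abs_add_le _ _
  have hl1smul : ∀ (r : ℝ) a, l1 (r • a) = |r| * l1 a := by
    intro r a
    rw [hl1, hl1, Finset.mul_sum]
    exact Finset.sum_congr rfl fun k _ => by rw [Pi.smul_apply, smul_eq_mul, abs_mul]
  have hcvx : ∀ (y : Fin (d+1) → ℝ) (r : ℝ), Convex ℝ {x | l1 (x - y) ≤ r} := by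
    intro y r a ha b hb s t hs ht hst
    simp only [Set.mem_setOf_eq] at ha hb ⊢
    have ht' : t = 1 - s := by linarith
    subst ht'
    have hrw : s • a + (1 - s) • b - y = s • (a - y) + (1 - s) • (b - y) := by module
    rw [hrw]
    calc l1 (s • (a - y) + (1 - s) • (b - y)) ≤ l1 (s • (a - y)) + l1 ((1 - s) • (b - y)) :=
          hl1tri _ _
      _ = |s| * l1 (a - y) + |1 - s| * l1 (b - y) := by rw [hl1smul, hl1smul]
      _ = s * l1 (a - y) + (1 - s) * l1 (b - y) := by
          rw [abs_of_nonneg hs, abs_of_nonneg (by linarith)]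
      _ ≤ s * r + (1 - s) * r := by
          have h1 := mul_le_mul_of_nonneg_left ha hs
          have h2 := mul_le_mul_of_nonneg_left hb (by linarith : (0:ℝ) ≤ 1 - s)
          linarith
      _ = r := by ring
  have hVP : (V : Set (Fin (d+1) → ℝ)) ⊆ P := hP ▸ subset_convexHull ℝ _
  have hbP : ∀ x ∈ P, ∀ y ∈ P, l1 (x - y) ≤ 2 * d := by
    intro x hx y hy
    have step1 : ∀ z ∈ (V : Set (Fin (d+1) → ℝ)), l1 (x - z) ≤ 2 * d := by
      intro z hz
      exact convexHull_min (fun w hw => hbV w hw z hz) (hcvx z (2 * d)) (hP ▸ hx)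
    have step2 : P ⊆ {w | l1 (w - x) ≤ 2 * d} := by
      rw [hP]
      refine convexHull_min (fun z hz => ?_) (hcvx x (2 * d))
      show l1 (z - x) ≤ 2 * d
      rw [hl1sub]
      exact step1 z hz
    have := step2 hy
    rw [hl1sub]
    exact this
  -- diameters and min distance
  have hdiamV : polyDiam l1 (V : Set (Fin (d+1) → ℝ)) = 2 * d := by
    have hg : IsGreatest {r | ∃ x ∈ (V : Set (Fin (d+1) → ℝ)),
        ∃ y ∈ (V : Set (Fin (d+1) → ℝ)), l1 (x - y) = r} (2 * d) := by
      constructor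
      · exact ⟨v i0, hvVs i0, v i1, hvVs i1, hA i0 i1 hi01⟩
      · rintro r ⟨x, hx, y, hy, rfl⟩
        exact hbV x hx y hy
    exact hg.csSup_eq
  have hdiamP : polyDiam l1 P = 2 * d := by
    have hg : IsGreatest {r | ∃ x ∈ P, ∃ y ∈ P, l1 (x - y) = r} (2 * d) := by
      constructor
      · exact ⟨v i0, hVP (hvVs i0), v i1, hVP (hvVs i1), hA i0 i1 hi01⟩
      · rintro r ⟨x, hx, y, hy, rfl⟩
        exact hbP x hx y hy
    exact hg.csSup_eq
  have hminV : minPairDist l1 V = 4 := by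
    have hg : IsLeast {r | ∃ x ∈ V, ∃ y ∈ V, x ≠ y ∧ l1 (x - y) = r} 4 := by
      constructor
      · exact ⟨pp, Finset.mem_coe.1 hpVs, qq, Finset.mem_coe.1 hqVs, hpq, hC⟩
      · rintro r ⟨x, hx, y, hy, hxy, rfl⟩
        by_cases hp2 : ({x, y} : Set (Fin (d+1) → ℝ)) = {pp, qq}
        · rcases Set.pair_eq_pair_iff.1 hp2 with ⟨rfl, rfl⟩ | ⟨rfl, rfl⟩
          · rw [hC]
          · rw [hl1sub, hC]
        · rw [hpair x (Finset.mem_coe.2 hx) y (Finset.mem_coe.2 hy) hxy hp2]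
          linarith
    exact hg.csInf_eq
  -- extreme points
  have hPiV : Set.extremePoints ℝ P = (V : Set (Fin (d+1) → ℝ)) := by
    apply Set.Subset.antisymm
    · rw [hP]; exact extremePoints_convexHull_subset
    · intro w hw
      rw [hP]
      have hw' := hw
      rw [hV] at hw'
      simp only [Set.mem_union, Set.mem_range, Set.mem_insert_iff, Set.mem_singleton_iff] at hw'
      rcases hw' with ⟨i, rfl⟩ | rfl | rfl
      · refine vertex_extreme (hvVs i) (LinearMap.proj i.castSucc) ?_ ?_
        · intro u hu hne
          rw [hV] at hu
          simp only [Set.mem_union, Set.mem_range, Set.mem_insert_iff,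
            Set.mem_singleton_iff] at hu
          rcases hu with ⟨j, rfl⟩ | rfl | rfl
          · show v j i.castSucc ≤ 0
            rw [hvc j i, if_neg (fun h => hne (by rw [h]))]
            norm_num
          · show pp i.castSucc ≤ 0
            rw [hpc]
          · show qq i.castSucc ≤ 0
            rw [hqqdef, Pi.neg_apply, hpc]
            norm_num
        · show 0 < v i i.castSucc
          rw [hvc i i, if_pos rfl]
          linarith
      · refine vertex_extreme hpVs (LinearMap.proj (Fin.last d)) ?_ ?_
        · intro u hu hne
          rw [hV] at hu
          simp only [Set.mem_union, Set.mem_range, Set.mem_insert_iff,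
            Set.mem_singleton_iff] at hu
          rcases hu with ⟨j, rfl⟩ | rfl | rfl
          · show v j (Fin.last d) ≤ 0
            rw [hvl]
          · exact absurd rfl hne
          · show qq (Fin.last d) ≤ 0
            rw [hqqdef, Pi.neg_apply, hpl]
            norm_num
        · show 0 < pp (Fin.last d)
          rw [hpl]
          norm_num
      · refine vertex_extreme hqVs (-(LinearMap.proj (Fin.last d))) ?_ ?_
        · intro u hu hne
          rw [hV] at hu
          simp only [Set.mem_union, Set.mem_range, Set.mem_insert_iff,
            Set.mem_singleton_iff] at hu
          rcases hu with ⟨j, rfl⟩ | rfl | rfl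
          · show -(v j (Fin.last d)) ≤ 0
            rw [hvl]
            norm_num
          · show -(pp (Fin.last d)) ≤ 0
            rw [hpl]
            norm_num
          · exact absurd rfl hne
        · show 0 < -(qq (Fin.last d))
          rw [hqqdef, Pi.neg_apply, hpl]
          norm_num
  -- the hyperplane
  have hXV : ∀ w ∈ (V : Set (Fin (d+1) → ℝ)), ∑ i : Fin d, w i.castSucc = 0 := by
    intro w hw
    rw [hV] at hw
    simp only [Set.mem_union, Set.mem_range, Set.mem_insert_iff, Set.mem_singleton_iff] at hw
    rcases hw with ⟨j, rfl⟩ | rfl | rfl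
    · rw [Finset.sum_congr rfl fun i _ => hvc j i]
      have hterm : ∀ i : Fin d, (if i = j then (d:ℝ) - 1 else -1)
          = (if i = j then (d:ℝ) else 0) + (-1) := by
        intro i
        by_cases h : i = j <;> simp [h] <;> ring
      rw [Finset.sum_congr rfl fun i _ => hterm i, Finset.sum_add_distrib,
        Finset.sum_ite_eq' Finset.univ j fun _ => (d:ℝ), Finset.sum_const, Finset.card_univ,
        Fintype.card_fin]
      simp
    · rw [Finset.sum_congr rfl fun i _ => hpc i, Finset.sum_const, smul_zero]
    · rw [Finset.sum_congr rfl fun i (_ : i ∈ Finset.univ) =>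
        (by rw [hqqdef, Pi.neg_apply, hpc i, neg_zero] : qq i.castSucc = 0),
        Finset.sum_const, smul_zero]
  -- dimension
  have hrank : Module.finrank ℝ (affineSpan ℝ (V : Set (Fin (d+1) → ℝ))).direction = d := by
    set f : (Fin (d+1) → ℝ) →ₗ[ℝ] ℝ := ∑ i : Fin d, LinearMap.proj i.castSucc with hfdef
    have hfapp : ∀ x : Fin (d+1) → ℝ, f x = ∑ i : Fin d, x i.castSucc := by
      intro x
      rw [hfdef]
      simp [LinearMap.sum_apply, LinearMap.proj_apply]
    have hdir : (affineSpan ℝ (V : Set (Fin (d+1) → ℝ))).direction = LinearMap.ker f := by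
      rw [direction_affineSpan]
      apply le_antisymm
      · rw [vectorSpan_def]
        apply Submodule.span_le.2
        rintro z hz
        rw [Set.mem_vsub] at hz
        obtain ⟨a, ha, b, hb, rfl⟩ := hz
        rw [SetLike.mem_coe, LinearMap.mem_ker]
        have hab : (a -ᵥ b : Fin (d+1) → ℝ) = a - b := rfl
        rw [hab, map_sub, hfapp, hfapp, hXV a ha, hXV b hb, sub_zero]
      · intro x hx
        rw [LinearMap.mem_ker, hfapp] at hx
        have hrep : x = (∑ i : Fin d, ((x i.castSucc) / d) • (v i - v i0))
            + ((x (Fin.last d)) / 4) • (pp - qq) := by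
          funext k
          induction k using Fin.lastCases with
          | last =>
            simp only [Pi.add_apply, Finset.sum_apply, Pi.smul_apply, Pi.sub_apply,
              smul_eq_mul, hvl, hqqdef, Pi.neg_apply, hpl]
            rw [Finset.sum_eq_zero (fun i _ => by ring)]
            ring
          | cast j =>
            simp only [Pi.add_apply, Finset.sum_apply, Pi.smul_apply, Pi.sub_apply,
              smul_eq_mul, hqqdef, Pi.neg_apply, hpc j]
            have hterm : ∀ i : Fin d, x i.castSucc / d * (v i j.castSucc - v i0 j.castSucc)
                = (if j = i then x i.castSucc else 0)
                  - (if j = i0 then x i.castSucc else 0) := by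
              intro i
              rw [hvc i j, hvc i0 j]
              by_cases h1 : j = i
              · by_cases h2 : j = i0
                · rw [if_pos h1, if_pos h2, if_pos h1, if_pos h2]; ring
                · rw [if_pos h1, if_neg h2, if_pos h1, if_neg h2,
                    show ((d:ℝ) - 1 - (-1)) = d by ring, div_mul_cancel₀ _ hd0, sub_zero]
              · by_cases h2 : j = i0
                · rw [if_neg h1, if_pos h2, if_neg h1, if_pos h2,
                    show ((-1:ℝ) - ((d:ℝ) - 1)) = -d by ring, mul_neg,
                    div_mul_cancel₀ _ hd0, zero_sub]
                · rw [if_neg h1, if_neg h2, if_neg h1, if_neg h2]; ring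
            rw [Finset.sum_congr rfl fun i _ => hterm i, Finset.sum_sub_distrib]
            have hsum1 : (∑ i : Fin d, if j = i then x i.castSucc else 0) = x j.castSucc := by
              rw [Finset.sum_ite_eq Finset.univ j fun i => x i.castSucc]
              simp
            have hsum2 : (∑ i : Fin d, if j = i0 then x i.castSucc else 0) = 0 := by
              by_cases h2 : j = i0
              · simp only [if_pos h2]
                exact hx
              · simp only [if_neg h2, Finset.sum_const_zero]
            rw [hsum1, hsum2]
            ring
        rw [hrep]
        apply Submodule.add_mem
        · apply Submodule.sum_mem
          intro i _
          exact Submodule.smul_mem _ _ (vsub_mem_vectorSpan ℝ (hvVs i) (hvVs i0))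
        · exact Submodule.smul_mem _ _ (vsub_mem_vectorSpan ℝ hpVs hqVs)
    rw [hdir]
    have hsurj : Function.Surjective f := by
      intro r
      refine ⟨Pi.single (i0.castSucc) r, ?_⟩
      rw [hfapp]
      simp only [Pi.single_apply, Fin.castSucc_inj]
      rw [Finset.sum_ite_eq' Finset.univ i0 fun _ => r]
      simp
    have hrk := LinearMap.finrank_range_add_finrank_ker f
    rw [LinearMap.range_eq_top.2 hsurj, finrank_top, Module.finrank_fintype_fun_eq_card,
      Fintype.card_fin, Module.finrank_self] at hrk
    omega
  -- [pp, qq] is not an edge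
  have hsum0 : ∑ i : Fin d, v i = 0 := by
    simp only [hvdef]
    rw [Finset.sum_sub_distrib, ← Finset.smul_sum, ← hc, Finset.sum_const, Finset.card_univ,
      Fintype.card_fin, ← Nat.cast_smul_eq_nsmul ℝ d c, sub_self]
  have hwP : ((d:ℝ) - 1)⁻¹ • ∑ i ∈ Finset.univ.erase i0, v i ∈ P := by
    have hcard : (Finset.univ.erase i0).card = d - 1 := by
      rw [Finset.card_erase_of_mem (Finset.mem_univ i0), Finset.card_univ, Fintype.card_fin]
    have hpos : (0:ℝ) < ∑ _i ∈ Finset.univ.erase i0, (1:ℝ) := by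
      rw [Finset.sum_const, hcard, nsmul_eq_mul, mul_one]
      have : 1 ≤ d - 1 := by omega
      have : (1:ℝ) ≤ ((d - 1 : ℕ) : ℝ) := by exact_mod_cast this
      linarith
    have hmem := Finset.centerMass_mem_convexHull (Finset.univ.erase i0)
      (fun _ _ => zero_le_one) hpos (fun i _ => hvVs i)
    rw [hP]
    have hcm : (Finset.univ.erase i0).centerMass (fun _ => (1:ℝ)) v
        = ((d:ℝ) - 1)⁻¹ • ∑ i ∈ Finset.univ.erase i0, v i := by
      rw [Finset.centerMass, Finset.sum_const, hcard, nsmul_eq_mul, mul_one]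
      congr 1
      · rw [Nat.cast_sub (by omega), Nat.cast_one]
      · exact Finset.sum_congr rfl fun i _ => one_smul _ _
    rw [← hcm]
    exact hmem
  have hzseg : (0 : Fin (d+1) → ℝ) ∈ segment ℝ pp qq := by
    refine ⟨1/2, 1/2, by norm_num, by norm_num, by norm_num, ?_⟩
    rw [hqqdef]
    module
  have hzopen : (0 : Fin (d+1) → ℝ) ∈ openSegment ℝ (v i0)
      (((d:ℝ) - 1)⁻¹ • ∑ i ∈ Finset.univ.erase i0, v i) := by
    have hdpos : (0:ℝ) < d := by linarith
    have hd1pos : (0:ℝ) < (d:ℝ) - 1 := by linarith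
    refine ⟨1/(d:ℝ), ((d:ℝ) - 1)/d, by positivity, by positivity, by field_simp; ring, ?_⟩
    rw [smul_smul, show ((d:ℝ) - 1)/d * ((d:ℝ) - 1)⁻¹ = 1/(d:ℝ) by field_simp,
      ← smul_add, Finset.add_sum_erase _ v (Finset.mem_univ i0), hsum0, smul_zero]
  have hnotedge : ¬ IsExtreme ℝ P (segment ℝ pp qq) := by
    intro hext
    have h1 := hext.2 (hVP (hvVs i0)) hwP hzseg hzopen
    obtain ⟨a, b, ha, hb, hab, habe⟩ := h1
    have hco := congrFun habe i0.castSucc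
    simp only [Pi.add_apply, Pi.smul_apply, smul_eq_mul, hpc i0, hqqdef, Pi.neg_apply] at hco
    rw [hvc i0 i0, if_pos rfl] at hco
    nlinarith
  -- subequilateral
  have hsubeq : Subequilateral l1 P := by
    rintro x y ⟨hxy, hex⟩
    have hxe : x ∈ Set.extremePoints ℝ P :=
      hex.extremePoints_subset_extremePoints (seg_endpoint_extreme hxy)
    have hye : y ∈ Set.extremePoints ℝ P := by
      rw [segment_symm] at hex
      exact hex.extremePoints_subset_extremePoints (seg_endpoint_extreme hxy.symm)
    rw [hPiV] at hxe hye
    have hne : ({x, y} : Set (Fin (d+1) → ℝ)) ≠ {pp, qq} := by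
      intro hxypq
      rcases Set.pair_eq_pair_iff.1 hxypq with ⟨rfl, rfl⟩ | ⟨rfl, rfl⟩
      · exact hnotedge hex
      · rw [segment_symm] at hex
        exact hnotedge hex
    rw [hdiamP]
    exact hpair x hxe y hye hxy hne
  refine ⟨?_, hPiV, hrank, hC, ?_, hsubeq, ?_⟩
  · rw [hX]
    intro w hw
    exact hXV w hw
  · intro x hx y hy hxy hne
    exact hpair x (Finset.mem_coe.2 hx) y (Finset.mem_coe.2 hy) hxy hne
  · show polyDiam l1 (V : Set (Fin (d+1) → ℝ)) / minPairDist l1 V = (d:ℝ) / 2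
    rw [hdiamV, hminV]
    ring
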